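/- Let C and C' be full subcategories of the category of Hilbert spaces (objects Hilbert spaces, arrows bounded linear maps) both containing ℂ as an object, and let R : C' → C be a faithful full linear *-functor with R(ℂ) = ℂ and R(f) = f for every f ∈ (ℂ, ℂ) ≅ ℂ. For an object H' of C', define R^{H'} : H' → R(H') by R^{H'}(v) := (R(v_•))(1), where v_• ∈ (ℂ, H') is the map λ ↦ λv. Then: (1) each R^{H'} is a unitary operator; (2) for every arrow f : H' → K' in C' one has R(f) = R^{K'} ∘ f ∘ (R^{H'})^{-1}. -/

import Mathlib

/-- Adjoin `ℂ` as a distinguished (identity) object to a family of Hilbert spaces. -/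
def OExt {ι : Type} (A : ι → Type) : Option ι → Type
  | none => ℂ
  | some i => A i

noncomputable instance OExt.normedAddCommGroup {ι : Type} (A : ι → Type)
    [∀ i, NormedAddCommGroup (A i)] : ∀ x, NormedAddCommGroup (OExt A x)
  | none => inferInstanceAs (NormedAddCommGroup ℂ)
  | some i => inferInstanceAs (NormedAddCommGroup (A i))

noncomputable instance OExt.innerProductSpace {ι : Type} (A : ι → Type)
    [∀ i, NormedAddCommGroup (A i)] [∀ i, InnerProductSpace ℂ (A i)] :
    ∀ x, InnerProductSpace ℂ (OExt A x)
  | none => inferInstanceAs (InnerProductSpace ℂ ℂ)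
  | some i => inferInstanceAs (InnerProductSpace ℂ (A i))

instance OExt.completeSpace {ι : Type} (A : ι → Type)
    [∀ i, NormedAddCommGroup (A i)] [∀ i, CompleteSpace (A i)] :
    ∀ x, CompleteSpace (OExt A x)
  | none => inferInstanceAs (CompleteSpace ℂ)
  | some i => inferInstanceAs (CompleteSpace (A i))


lemma toSpanSingleton_apply_one_eq {E : Type*} [NormedAddCommGroup E] [NormedSpace ℂ E]
    (g : ℂ →L[ℂ] E) : ContinuousLinearMap.toSpanSingleton ℂ (g 1) = g := by
  ext c
  simp [ContinuousLinearMap.toSpanSingleton_apply, ← map_smul, smul_eq_mul]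

/-- Let `R` be a faithful full linear *-functor between full subcategories of
`Hilb` containing `ℂ`, with `R(ℂ) = ℂ` and `R` the identity on `(ℂ, ℂ)`.
Define `R^{H'}(v) := (R(v_•))(1)`. Then each `R^{H'}` is a unitary
(bijective, linear, norm-preserving), and `R(f) = R^{K'} ∘ f ∘ (R^{H'})⁻¹`,
i.e. `R(f)(R^{H'}(v)) = R^{K'}(f v)` for every arrow `f : H' → K'`. -/
theorem embedding_functor_unitary_implementation
    {ι ι' : Type} (A : ι → Type) (A' : ι' → Type)
    [∀ i, NormedAddCommGroup (A i)] [∀ i, InnerProductSpace ℂ (A i)]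
    [∀ i, CompleteSpace (A i)]
    [∀ i, NormedAddCommGroup (A' i)] [∀ i, InnerProductSpace ℂ (A' i)]
    [∀ i, CompleteSpace (A' i)]
    (F : ι' → ι)
    (R : ∀ X Y : Option ι',
      (OExt A' X →L[ℂ] OExt A' Y) → (OExt A (X.map F) →L[ℂ] OExt A (Y.map F)))
    (Radd : ∀ X Y f g, R X Y (f + g) = R X Y f + R X Y g)
    (Rsmul : ∀ X Y (c : ℂ) f, R X Y (c • f) = c • R X Y f)
    (Rid : ∀ X, R X X (ContinuousLinearMap.id ℂ _) = ContinuousLinearMap.id ℂ _)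
    (Rcomp : ∀ X Y Z (f : OExt A' X →L[ℂ] OExt A' Y) (g : OExt A' Y →L[ℂ] OExt A' Z),
      R X Z (g.comp f) = (R Y Z g).comp (R X Y f))
    (Rstar : ∀ X Y (f : OExt A' X →L[ℂ] OExt A' Y),
      R Y X (ContinuousLinearMap.adjoint f) = ContinuousLinearMap.adjoint (R X Y f))
    (Rfull : ∀ X Y, Function.Surjective (R X Y))
    (Rfaithful : ∀ X Y, Function.Injective (R X Y))
    (Runit : ∀ f : OExt A' none →L[ℂ] OExt A' none, R none none f = f) :
    (∀ X : Option ι',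
      (∀ v w : OExt A' X,
        R none X (ContinuousLinearMap.toSpanSingleton ℂ (v + w)) (1 : ℂ)
          = R none X (ContinuousLinearMap.toSpanSingleton ℂ v) (1 : ℂ)
            + R none X (ContinuousLinearMap.toSpanSingleton ℂ w) (1 : ℂ))
      ∧ (∀ (c : ℂ) (v : OExt A' X),
        R none X (ContinuousLinearMap.toSpanSingleton ℂ (c • v)) (1 : ℂ)
          = c • R none X (ContinuousLinearMap.toSpanSingleton ℂ v) (1 : ℂ))
      ∧ Function.Bijective
          (fun v : OExt A' X => R none X (ContinuousLinearMap.toSpanSingleton ℂ v) (1 : ℂ))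
      ∧ (∀ v : OExt A' X,
        ‖R none X (ContinuousLinearMap.toSpanSingleton ℂ v) (1 : ℂ)‖ = ‖v‖))
    ∧ (∀ (X Y : Option ι') (f : OExt A' X →L[ℂ] OExt A' Y) (v : OExt A' X),
        R X Y f (R none X (ContinuousLinearMap.toSpanSingleton ℂ v) (1 : ℂ))
          = R none Y (ContinuousLinearMap.toSpanSingleton ℂ (f v)) (1 : ℂ)) := by
  classical
  have hnat : ∀ (X Y : Option ι') (f : OExt A' X →L[ℂ] OExt A' Y) (v : OExt A' X),
      R X Y f (R none X (ContinuousLinearMap.toSpanSingleton ℂ v) (1 : ℂ))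
        = R none Y (ContinuousLinearMap.toSpanSingleton ℂ (f v)) (1 : ℂ) := by
    intro X Y f v
    have h1 : f.comp (ContinuousLinearMap.toSpanSingleton ℂ v)
        = ContinuousLinearMap.toSpanSingleton ℂ (f v) := by
      ext c
      simp [ContinuousLinearMap.toSpanSingleton_apply, map_smul]
    have h2 := Rcomp none X Y (ContinuousLinearMap.toSpanSingleton ℂ v) f
    erw [h1] at h2
    exact (congrArg (fun g => g (1 : ℂ)) h2).symm
  have hadd : ∀ (X : Option ι') (v w : OExt A' X),
      R none X (ContinuousLinearMap.toSpanSingleton ℂ (v + w)) (1 : ℂ)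
        = R none X (ContinuousLinearMap.toSpanSingleton ℂ v) (1 : ℂ)
          + R none X (ContinuousLinearMap.toSpanSingleton ℂ w) (1 : ℂ) := by
    intro X v w
    have h1 : ContinuousLinearMap.toSpanSingleton ℂ (v + w)
        = ContinuousLinearMap.toSpanSingleton ℂ v + ContinuousLinearMap.toSpanSingleton ℂ w := by
      ext c
      simp [ContinuousLinearMap.toSpanSingleton_apply, smul_add]
    rw [h1]
    erw [Radd]
    rfl
  have hsmul : ∀ (X : Option ι') (c : ℂ) (v : OExt A' X),
      R none X (ContinuousLinearMap.toSpanSingleton ℂ (c • v)) (1 : ℂ)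
        = c • R none X (ContinuousLinearMap.toSpanSingleton ℂ v) (1 : ℂ) := by
    intro X c v
    have h1 : ContinuousLinearMap.toSpanSingleton ℂ (c • v)
        = c • ContinuousLinearMap.toSpanSingleton ℂ v := by
      ext d
      simp [ContinuousLinearMap.toSpanSingleton_apply, smul_smul, mul_comm]
    rw [h1]
    erw [Rsmul]
    rfl
  have hinner : ∀ (X : Option ι') (v : OExt A' X),
      (inner ℂ (R none X (ContinuousLinearMap.toSpanSingleton ℂ v) (1 : ℂ))
        (R none X (ContinuousLinearMap.toSpanSingleton ℂ v) (1 : ℂ)) : ℂ)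
        = (inner ℂ v v : ℂ) := by
    intro X v
    set s := ContinuousLinearMap.toSpanSingleton ℂ v with hs
    set u := R none X s with hu
    have hadj : (ContinuousLinearMap.adjoint u).comp u
        = (ContinuousLinearMap.adjoint s).comp s := by
      erw [← Rstar, ← Rcomp, Runit]
      rfl
    have e1 : (inner ℂ (u (1 : ℂ)) (u (1 : ℂ)) : ℂ)
        = (inner ℂ ((ContinuousLinearMap.adjoint u) (u (1 : ℂ))) (1 : ℂ) : ℂ) :=
      (ContinuousLinearMap.adjoint_inner_left u (1 : ℂ) (u (1 : ℂ))).symm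
    have e2 : (ContinuousLinearMap.adjoint u) (u (1 : ℂ))
        = (ContinuousLinearMap.adjoint s) (s (1 : ℂ)) :=
      congrArg (fun g => g (1 : ℂ)) hadj
    have e3 : (inner ℂ ((ContinuousLinearMap.adjoint s) (s (1 : ℂ))) (1 : ℂ) : ℂ)
        = (inner ℂ (s (1 : ℂ)) (s (1 : ℂ)) : ℂ) :=
      ContinuousLinearMap.adjoint_inner_left s (1 : ℂ) (s (1 : ℂ))
    have e4 : s (1 : ℂ) = v := by
      simp [hs, ContinuousLinearMap.toSpanSingleton_apply]
    rw [e1, e2]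
    exact e3.trans (by rw [e4])
  have hnorm : ∀ (X : Option ι') (v : OExt A' X),
      ‖R none X (ContinuousLinearMap.toSpanSingleton ℂ v) (1 : ℂ)‖ = ‖v‖ := by
    intro X v
    have h := hinner X v
    rw [inner_self_eq_norm_sq_to_K, inner_self_eq_norm_sq_to_K] at h
    have h2 : (‖R none X (ContinuousLinearMap.toSpanSingleton ℂ v) (1 : ℂ)‖ : ℝ) ^ 2
        = ‖v‖ ^ 2 := by
      exact_mod_cast h
    nlinarith [norm_nonneg (R none X (ContinuousLinearMap.toSpanSingleton ℂ v) (1 : ℂ)),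
      norm_nonneg v]
  refine ⟨fun X => ⟨hadd X, hsmul X, ⟨?_, ?_⟩, hnorm X⟩, hnat⟩
  · intro v w h
    have h1 : R none X (ContinuousLinearMap.toSpanSingleton ℂ v)
        = R none X (ContinuousLinearMap.toSpanSingleton ℂ w) := by
      rw [← toSpanSingleton_apply_one_eq (R none X (ContinuousLinearMap.toSpanSingleton ℂ v)),
        ← toSpanSingleton_apply_one_eq (R none X (ContinuousLinearMap.toSpanSingleton ℂ w))]
      exact congrArg _ h
    have h2 := Rfaithful none X h1
    have h3 := congrArg (fun g : ℂ →L[ℂ] OExt A' X => g (1 : ℂ)) h2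
    simpa [ContinuousLinearMap.toSpanSingleton_apply] using h3
  · intro w
    obtain ⟨g, hg⟩ := Rfull none X (ContinuousLinearMap.toSpanSingleton ℂ w)
    refine ⟨(g : ℂ →L[ℂ] OExt A' X) (1 : ℂ), ?_⟩
    have h1 : ContinuousLinearMap.toSpanSingleton ℂ ((g : ℂ →L[ℂ] OExt A' X) (1 : ℂ)) = g :=
      toSpanSingleton_apply_one_eq _
    simp only
    rw [h1, hg]
    exact one_smul ℂ w
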